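/- arXiv:1901.02304 — 2 statements merged into one kernel-verified Lean document; each statement's English description precedes it below -/
import Mathlib

section
/- Define I(α) = Q + PQ − Σ_{i<j}(pᵢqⱼ − pⱼqᵢ) − P² − e(α) for data as above, where 0 ≤ e(α) ≤ Q. Then I(α) ≥ 0. -/
open Finset

/-- Nonnegativity of the combinatorial ECH index
`I(α) = Q + PQ − Σ_{i<j}(pᵢqⱼ − pⱼqᵢ) − P² − e(α)` when `0 ≤ e(α) ≤ Q`. -/
theorem ECH_index_nonneg (n : ℕ) (p q : Fin n → ℤ)
    (hp0 : ∀ i, 0 ≤ p i) (hpq : ∀ i, p i ≤ q i) (hq : ∀ i, 0 < q i)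
    (hord : ∀ i j : Fin n, i ≤ j → p j * q i ≤ p i * q j)
    (e : ℤ) (he0 : 0 ≤ e) (heQ : e ≤ ∑ i, q i) :
    0 ≤ (∑ i, q i) +
        ((∑ i, p i) * (∑ i, q i) - ∑ i, ∑ j ∈ Finset.Ioi i, (p i * q j - p j * q i)) -
        (∑ i, p i) ^ 2 - e := by
  set r : Fin n → ℤ := fun i => q i - p i with hr
  have hr0 : ∀ i, 0 ≤ r i := fun i => by simp [hr, hpq i]
  have key : ∑ i, ∑ j ∈ Finset.Ioi i, (p i * q j - p j * q i)
      ≤ (∑ i, p i) * (∑ i, q i) - (∑ i, p i) ^ 2 := by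
    have h1 : (∑ i, p i) * (∑ i, q i) - (∑ i, p i) ^ 2
        = ∑ i, ∑ j, p j * r i := by
      rw [Finset.sum_mul_sum]
      simp only [hr, mul_sub]
      rw [sq, Finset.sum_mul_sum]
      rw [← Finset.sum_sub_distrib]
      rw [Finset.sum_comm (f := fun i j => p j * q i - p j * p i)]
      simp [Finset.sum_sub_distrib, mul_comm]
    have h2 : ∑ i, ∑ j ∈ Finset.Ioi i, (p i * q j - p j * q i)
        = ∑ i, ∑ j ∈ Finset.Ioi i, (p i * r j - p j * r i) := by
      apply Finset.sum_congr rfl; intro i _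
      apply Finset.sum_congr rfl; intro j _
      simp [hr]; ring
    rw [h1, h2]
    have h3 : ∑ i, ∑ j ∈ Finset.Ioi i, (p i * r j - p j * r i)
        ≤ ∑ i, ∑ j ∈ Finset.Ioi i, (p j * r i + p i * r j) := by
      apply Finset.sum_le_sum; intro i _
      apply Finset.sum_le_sum; intro j _
      have := mul_nonneg (hp0 j) (hr0 i)
      linarith
    refine h3.trans ?_
    rw [Finset.sum_sum_Ioi_add_eq_sum_sum_off_diag (fun a b => p a * r b)]
    apply Finset.sum_le_sum; intro i _
    exact Finset.sum_le_sum_of_subset_of_nonneg (Finset.subset_univ _)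
      (fun j _ _ => mul_nonneg (hp0 j) (hr0 i))
  linarith
end

section
/- With I(α) = Q + 2·Area(Λ_α) − P² − e(α) as above, I(α) = 0 if and only if e(α) = Q and 2·Area(Λ_α) = P², which happens exactly when every edge vector (pᵢ,qᵢ) is either (1,1) or (0,1) (i.e. every slope is 0 or 1) and all orbits are elliptic. -/
open Finset

lemma swap_sum {n : ℕ} (f : Fin n → Fin n → ℤ) :
    (∑ i, ∑ j ∈ Finset.Iio i, f i j) = ∑ i, ∑ j ∈ Finset.Ioi i, f j i :=
  Finset.sum_comm' (by simp)

lemma univ_split {n : ℕ} (i : Fin n) (g : Fin n → ℤ) :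
    (∑ j, g j) = (∑ j ∈ Finset.Iio i, g j) + (g i + ∑ j ∈ Finset.Ioi i, g j) := by
  have hu : (Finset.univ : Finset (Fin n)) = Finset.Iio i ∪ Finset.Ici i := by
    ext x; simp [lt_or_ge]
  have hd : Disjoint (Finset.Iio i) (Finset.Ici i) := by
    simp [Finset.disjoint_left]
  rw [hu, Finset.sum_union hd, Finset.Ici_eq_cons_Ioi, Finset.sum_cons]

lemma expand_sum_mul {n : ℕ} (p q : Fin n → ℤ) :
    (∑ i, p i) * (∑ i, q i)
      = ∑ i, ((∑ j ∈ Finset.Ioi i, p j * q i) + (p i * q i + ∑ j ∈ Finset.Ioi i, p i * q j)) := by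
  calc (∑ i, p i) * (∑ i, q i) = ∑ i, ∑ j, p i * q j := by
        rw [Finset.sum_mul_sum]
    _ = ∑ i, ((∑ j ∈ Finset.Iio i, p i * q j)
          + (p i * q i + ∑ j ∈ Finset.Ioi i, p i * q j)) :=
        Finset.sum_congr rfl fun i _ => univ_split i _
    _ = (∑ i, ∑ j ∈ Finset.Iio i, p i * q j)
          + ∑ i, (p i * q i + ∑ j ∈ Finset.Ioi i, p i * q j) := Finset.sum_add_distrib
    _ = (∑ i, ∑ j ∈ Finset.Ioi i, p j * q i)
          + ∑ i, (p i * q i + ∑ j ∈ Finset.Ioi i, p i * q j) := by rw [swap_sum]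
    _ = _ := Finset.sum_add_distrib.symm

lemma key_identity {n : ℕ} (p q : Fin n → ℤ) :
    (∑ i, p i) * (∑ i, q i) - (∑ i, ∑ j ∈ Finset.Ioi i, (p i * q j - p j * q i)) -
      (∑ i, p i) ^ 2 =
    ∑ i, (q i - p i) * (p i + 2 * ∑ j ∈ Finset.Ioi i, p j) := by
  rw [sq, expand_sum_mul p q, expand_sum_mul p p, ← Finset.sum_sub_distrib,
    ← Finset.sum_sub_distrib]
  refine Finset.sum_congr rfl fun i _ => ?_
  simp only [Finset.sum_sub_distrib, ← Finset.sum_mul, ← Finset.mul_sum]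
  ring

/-- `I(α) = 0` iff `e(α) = Q` and `2·Area(Λ_α) = P²`, which happens exactly when
every edge vector `(pᵢ, qᵢ)` is `(0,1)` or `(1,1)`. -/
theorem ECH_index_zero_iff (n : ℕ) (p q : Fin n → ℤ)
    (hp0 : ∀ i, 0 ≤ p i) (hpq : ∀ i, p i ≤ q i) (hq : ∀ i, 0 < q i)
    (hcop : ∀ i, IsCoprime (p i) (q i))
    (hord : ∀ i j : Fin n, i ≤ j → p j * q i ≤ p i * q j)
    (e : ℤ) (he0 : 0 ≤ e) (heQ : e ≤ ∑ i, q i) :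
    (∑ i, q i) +
        ((∑ i, p i) * (∑ i, q i) - ∑ i, ∑ j ∈ Finset.Ioi i, (p i * q j - p j * q i)) -
        (∑ i, p i) ^ 2 - e = 0 ↔
      (e = ∑ i, q i ∧
        (∑ i, p i) * (∑ i, q i) - ∑ i, ∑ j ∈ Finset.Ioi i, (p i * q j - p j * q i) =
          (∑ i, p i) ^ 2 ∧
        ∀ i, (p i = 0 ∧ q i = 1) ∨ (p i = 1 ∧ q i = 1)) := by
  have hterm : ∀ i, 0 ≤ (q i - p i) * (p i + 2 * ∑ j ∈ Finset.Ioi i, p j) := fun i =>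
    mul_nonneg (by linarith [hpq i])
      (by
        have : (0 : ℤ) ≤ ∑ j ∈ Finset.Ioi i, p j :=
          Finset.sum_nonneg fun j _ => hp0 j
        linarith [hp0 i])
  have hD0 : 0 ≤ ∑ i, (q i - p i) * (p i + 2 * ∑ j ∈ Finset.Ioi i, p j) :=
    Finset.sum_nonneg fun i _ => hterm i
  constructor
  · intro hI
    have hkey := key_identity p q
    -- I = (Q - e) + D with both nonneg
    have heq : e = ∑ i, q i := by linarith
    have hDzero : (∑ i, (q i - p i) * (p i + 2 * ∑ j ∈ Finset.Ioi i, p j)) = 0 := by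
      linarith
    refine ⟨heq, by linarith, ?_⟩
    have hall := (Finset.sum_eq_zero_iff_of_nonneg (fun i _ => hterm i)).mp hDzero
    intro i
    have hi := hall i (Finset.mem_univ i)
    rcases mul_eq_zero.mp hi with h1 | h2
    · -- q i = p i, coprime forces p i = 1
      have hqi : q i = p i := by linarith
      right
      have hcu : IsUnit (p i) := by
        have := hcop i
        rw [hqi] at this
        exact this.isUnit_of_dvd' dvd_rfl dvd_rfl
      have : p i = 1 := by
        rcases Int.isUnit_iff.mp hcu with h | h
        · exact h
        · exfalso; have := hq i; omega
      exact ⟨this, by omega⟩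
    · -- p i = 0, coprime forces q i = 1
      have hs : (0 : ℤ) ≤ ∑ j ∈ Finset.Ioi i, p j := Finset.sum_nonneg fun j _ => hp0 j
      have hpi : p i = 0 := by linarith [hp0 i]
      left
      have hcu : IsUnit (q i) := by
        have := hcop i
        rw [hpi] at this
        exact (isCoprime_zero_left.mp this)
      have : q i = 1 := by
        rcases Int.isUnit_iff.mp hcu with h | h
        · exact h
        · exfalso; have := hq i; omega
      exact ⟨hpi, this⟩
  · rintro ⟨he, hA, -⟩
    rw [he, hA]; ring
end
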